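/- In the proxy-metric model, the true expected reward of the decision rule that launches when the observed proxy effect is positive satisfies E[ τ_Y | τ̂_S > 0 ] = √(2/π) · Λ₁₂ / √( Λ₂₂ + 2Ω₂₂/M ). -/

import Mathlib

open MeasureTheory ProbabilityTheory Real NNReal ENNReal
open Filter Set Topology

/-- A measure `Q` on `ℝ × ℝ` is bivariate Gaussian with mean `(μA, μB)` and covariance
matrix `[[vA, vAB], [vAB, vB]]` iff every linear functional pushes it forward to the
one-dimensional Gaussian with the corresponding mean and variance (possibly degenerate,
i.e. a Dirac mass, when the variance vanishes). -/
def IsBivariateGaussian (Q : Measure (ℝ × ℝ)) (μA μB vA vAB vB : ℝ) : Prop :=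
  ∀ a b : ℝ, Q.map (fun p => a * p.1 + b * p.2) =
    gaussianReal (a * μA + b * μB)
      (Real.toNNReal (a ^ 2 * vA + 2 * a * b * vAB + b ^ 2 * vB))

lemma psd_quad {A B C : ℝ} (hA : 0 ≤ A) (hC : 0 ≤ C) (hB : B ^ 2 ≤ A * C) (a b : ℝ) :
    0 ≤ a ^ 2 * A + 2 * a * b * B + b ^ 2 * C := by
  rcases eq_or_lt_of_le hC with h | h
  · have hB0 : B = 0 := by nlinarith [sq_nonneg B]
    subst hB0
    nlinarith [sq_nonneg a, sq_nonneg b]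
  · nlinarith [sq_nonneg (a * B + b * C), sq_nonneg a, mul_nonneg hA hC]

lemma exp_conv {a b : ℝ} (ha : 0 < a) (hb : 0 < b) (z : ℝ) :
    ∫ x, (Real.sqrt (2*π*a))⁻¹ * rexp (-(x-0)^2/(2*a)) *
      ((Real.sqrt (2*π*b))⁻¹ * rexp (-(z-x-0)^2/(2*b))) =
      (Real.sqrt (2*π*(a+b)))⁻¹ * rexp (-(z-0)^2/(2*(a+b))) := by
  have hab : (0:ℝ) < a + b := by linarith
  set p : ℝ := (a+b)/(2*a*b) with hp
  have hp0 : 0 < p := by positivity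
  set q : ℝ := z*a/(a+b) with hq
  have hexp : ∀ x : ℝ, (Real.sqrt (2*π*a))⁻¹ * rexp (-(x-0)^2/(2*a)) *
      ((Real.sqrt (2*π*b))⁻¹ * rexp (-(z-x-0)^2/(2*b))) =
      ((Real.sqrt (2*π*a))⁻¹ * (Real.sqrt (2*π*b))⁻¹ * rexp (-(z-0)^2/(2*(a+b)))) *
        rexp (-p*(x-q)^2) := by
    intro x
    rw [mul_mul_mul_comm, mul_assoc ((Real.sqrt (2*π*a))⁻¹ * (Real.sqrt (2*π*b))⁻¹)]
    congr 1
    rw [← Real.exp_add, ← Real.exp_add]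
    congr 1
    rw [hp, hq]
    field_simp
    ring
  simp only [hexp]
  rw [integral_const_mul]
  have hgauss : ∫ x : ℝ, rexp (-p*(x-q)^2) = Real.sqrt (π/p) := by
    rw [← integral_gaussian p]
    exact integral_sub_right_eq_self (fun x => rexp (-p * x^2)) q
  rw [hgauss]
  have hs : Real.sqrt (π/p) = Real.sqrt (2*π*a) * Real.sqrt (2*π*b) / Real.sqrt (2*π*(a+b)) := by
    rw [← Real.sqrt_mul (by positivity), ← Real.sqrt_div (by positivity)]
    congr 1
    rw [hp]
    field_simp
  rw [hs]
  have h1 : Real.sqrt (2*π*a) ≠ 0 := by positivity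
  have h2 : Real.sqrt (2*π*b) ≠ 0 := by positivity
  have h3 : Real.sqrt (2*π*(a+b)) ≠ 0 := by positivity
  field_simp

lemma pdf_le (v : ℝ≥0) (x : ℝ) :
    gaussianPDFReal 0 v x ≤ (Real.sqrt (2*π*(v:ℝ)))⁻¹ := by
  unfold gaussianPDFReal
  refine mul_le_of_le_one_right (by positivity) ?_
  rw [Real.exp_le_one_iff]
  have h : (0:ℝ) ≤ (x-0)^2 / (2*(v:ℝ)) := by positivity
  rw [neg_div]
  linarith

lemma integrable_pdf_mul (v1 v2 : ℝ≥0) (z : ℝ) :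
    Integrable (fun x => gaussianPDFReal 0 v1 x * gaussianPDFReal 0 v2 (z - x)) := by
  refine Integrable.mono' ((integrable_gaussianPDFReal 0 v1).const_mul
    (Real.sqrt (2*π*(v2:ℝ)))⁻¹) ?_ ?_
  · exact ((measurable_gaussianPDFReal 0 v1).mul
      ((measurable_gaussianPDFReal 0 v2).comp (measurable_const.sub measurable_id))).aestronglyMeasurable
  · refine ae_of_all _ fun x => ?_
    rw [Real.norm_eq_abs, abs_of_nonneg (mul_nonneg (gaussianPDFReal_nonneg _ _ _)
      (gaussianPDFReal_nonneg _ _ _))]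
    rw [mul_comm ((Real.sqrt (2*π*(v2:ℝ)))⁻¹)]
    exact mul_le_mul_of_nonneg_left (pdf_le v2 _) (gaussianPDFReal_nonneg _ _ _)

lemma pdfReal_conv (v1 v2 : ℝ≥0) (h1 : v1 ≠ 0) (h2 : v2 ≠ 0) (z : ℝ) :
    ∫ x, gaussianPDFReal 0 v1 x * gaussianPDFReal 0 v2 (z - x)
      = gaussianPDFReal 0 (v1 + v2) z := by
  have ha : (0:ℝ) < v1 := by exact_mod_cast pos_iff_ne_zero.mpr h1
  have hb : (0:ℝ) < v2 := by exact_mod_cast pos_iff_ne_zero.mpr h2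
  unfold gaussianPDFReal
  push_cast
  exact exp_conv ha hb z

lemma gaussianPDF_conv (v1 v2 : ℝ≥0) (h1 : v1 ≠ 0) (h2 : v2 ≠ 0) (z : ℝ) :
    ∫⁻ x, gaussianPDF 0 v1 x * gaussianPDF 0 v2 (z - x) = gaussianPDF 0 (v1 + v2) z := by
  have hmul : ∀ x : ℝ, gaussianPDF 0 v1 x * gaussianPDF 0 v2 (z-x)
      = ENNReal.ofReal (gaussianPDFReal 0 v1 x * gaussianPDFReal 0 v2 (z-x)) := fun x =>
    (ENNReal.ofReal_mul (gaussianPDFReal_nonneg _ _ _)).symm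
  simp only [hmul]
  rw [← ofReal_integral_eq_lintegral_ofReal (integrable_pdf_mul v1 v2 z)
    (ae_of_all _ fun x => mul_nonneg (gaussianPDFReal_nonneg _ _ _) (gaussianPDFReal_nonneg _ _ _))]
  rw [pdfReal_conv v1 v2 h1 h2 z]
  rfl

lemma gaussian_conv (v1 v2 : ℝ≥0) :
    ((gaussianReal 0 v1).prod (gaussianReal 0 v2)).map (fun p : ℝ × ℝ => p.1 + p.2)
      = gaussianReal 0 (v1 + v2) := by
  by_cases h1 : v1 = 0
  · subst h1
    rw [gaussianReal_zero_var, Measure.dirac_prod, Measure.map_map measurable_add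
      measurable_prodMk_left]
    simp [Function.comp_def]
  by_cases h2 : v2 = 0
  · subst h2
    rw [gaussianReal_zero_var, Measure.prod_dirac, Measure.map_map measurable_add
      measurable_prodMk_right]
    simp [Function.comp_def]
  have h12 : v1 + v2 ≠ 0 := by simp [h1]
  ext s hs
  rw [Measure.map_apply measurable_add hs, Measure.prod_apply (measurable_add hs)]
  have m2 : ∀ x : ℝ, Measurable (fun z : ℝ => s.indicator (fun _ => (1:ℝ≥0∞)) z * gaussianPDF 0 v2 (z - x)) :=
    fun x => (measurable_const.indicator hs).mul
      ((measurable_gaussianPDF 0 v2).comp (measurable_id.sub measurable_const))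
  have m3 : ∀ z : ℝ, Measurable (fun x : ℝ => gaussianPDF 0 v1 x * gaussianPDF 0 v2 (z - x)) :=
    fun z => (measurable_gaussianPDF 0 v1).mul
      ((measurable_gaussianPDF 0 v2).comp (measurable_const.sub measurable_id))
  have hν2 : ∀ x : ℝ, (gaussianReal 0 v2) (Prod.mk x ⁻¹' ((fun p : ℝ × ℝ => p.1 + p.2) ⁻¹' s))
      = ∫⁻ z, s.indicator (fun _ => (1:ℝ≥0∞)) z * gaussianPDF 0 v2 (z - x) := by
    intro x
    have hpre : (Prod.mk x ⁻¹' ((fun p : ℝ × ℝ => p.1 + p.2) ⁻¹' s))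
        = (fun y => x + y) ⁻¹' s := rfl
    rw [hpre, gaussianReal_apply 0 h2, ← lintegral_indicator (measurable_const_add x hs)]
    have hind : ∀ y : ℝ, ((fun y => x + y) ⁻¹' s).indicator (gaussianPDF 0 v2) y
        = (fun z => s.indicator (fun _ => (1:ℝ≥0∞)) z * gaussianPDF 0 v2 (z - x)) (x + y) := by
      intro y
      by_cases hy : x + y ∈ s <;>
        simp [Set.indicator_apply, Set.mem_preimage, hy, add_sub_cancel_left]
    simp only [hind]
    exact lintegral_add_left_eq_self
      (fun z => s.indicator (fun _ => (1:ℝ≥0∞)) z * gaussianPDF 0 v2 (z - x)) x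
  simp only [hν2]
  rw [gaussianReal_of_var_ne_zero 0 h1, lintegral_withDensity_eq_lintegral_mul _
    (measurable_gaussianPDF 0 v1)]
  swap
  · apply Measurable.lintegral_prod_right (f := fun x z =>
      s.indicator (fun _ => (1:ℝ≥0∞)) z * gaussianPDF 0 v2 (z - x))
    exact ((measurable_const.indicator hs).comp measurable_snd).mul
      ((measurable_gaussianPDF 0 v2).comp (measurable_snd.sub measurable_fst))
  simp only [Pi.mul_apply]
  calc ∫⁻ x, gaussianPDF 0 v1 x * ∫⁻ z, s.indicator (fun _ => (1:ℝ≥0∞)) z * gaussianPDF 0 v2 (z - x)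
      = ∫⁻ x, ∫⁻ z, gaussianPDF 0 v1 x * (s.indicator (fun _ => (1:ℝ≥0∞)) z * gaussianPDF 0 v2 (z - x)) := by
        congr 1
        ext x
        rw [← lintegral_const_mul (gaussianPDF 0 v1 x) (m2 x)]
    _ = ∫⁻ z, ∫⁻ x, gaussianPDF 0 v1 x * (s.indicator (fun _ => (1:ℝ≥0∞)) z * gaussianPDF 0 v2 (z - x)) := by
        apply lintegral_lintegral_swap
        apply Measurable.aemeasurable
        exact ((measurable_gaussianPDF 0 v1).comp measurable_fst).mul
          (((measurable_const.indicator hs).comp measurable_snd).mul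
            ((measurable_gaussianPDF 0 v2).comp (measurable_snd.sub measurable_fst)))
    _ = ∫⁻ z, s.indicator (fun _ => (1:ℝ≥0∞)) z * ∫⁻ x, gaussianPDF 0 v1 x * gaussianPDF 0 v2 (z - x) := by
        congr 1
        ext z
        rw [← lintegral_const_mul (s.indicator (fun _ => (1:ℝ≥0∞)) z) (m3 z)]
        congr 1
        ext x
        ring
    _ = ∫⁻ z, s.indicator (fun _ => (1:ℝ≥0∞)) z * gaussianPDF 0 (v1 + v2) z := by
        congr 1
        ext z
        rw [gaussianPDF_conv v1 v2 h1 h2 z]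
    _ = gaussianReal 0 (v1 + v2) s := by
        rw [gaussianReal_apply 0 h12, ← lintegral_indicator hs]
        congr 1
        ext z
        by_cases hz : z ∈ s <;> simp [Set.indicator_apply, hz]

lemma gaussianReal_Ioi (v : ℝ≥0) (hv : v ≠ 0) : gaussianReal 0 v (Set.Ioi 0) = 1/2 := by
  have hneg : (gaussianReal 0 v).map (fun x : ℝ => (-1:ℝ) * x) = gaussianReal 0 v := by
    rw [gaussianReal_map_const_mul]
    norm_num
  have h1 : gaussianReal 0 v (Set.Ioi 0) = gaussianReal 0 v (Set.Iio 0) := by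
    conv_lhs => rw [← hneg]
    rw [Measure.map_apply (show Measurable fun x : ℝ => (-1:ℝ) * x by fun_prop) measurableSet_Ioi]
    congr 1
    ext x
    simp [neg_pos]
  have h0 : gaussianReal 0 v ({0} : Set ℝ) = 0 :=
    gaussianReal_absolutelyContinuous 0 hv (measure_singleton 0)
  have hIic : gaussianReal 0 v (Set.Iic 0) = gaussianReal 0 v (Set.Iio 0) := by
    rw [← Set.Iio_union_right, measure_union (by simp) (measurableSet_singleton 0), h0, add_zero]
  have hco : gaussianReal 0 v (Set.Ioi 0) + gaussianReal 0 v (Set.Iic 0) = 1 := by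
    have := measure_add_measure_compl (μ := gaussianReal 0 v) (measurableSet_Ioi (a := (0:ℝ)))
    rwa [Set.compl_Ioi, measure_univ] at this
  rw [hIic, ← h1] at hco
  refine (ENNReal.eq_div_iff two_ne_zero ENNReal.ofNat_ne_top).mpr ?_
  rw [two_mul]
  exact hco

lemma integrable_x_mul_pdf (v : ℝ≥0) (hv : v ≠ 0) :
    Integrable (fun x : ℝ => x * gaussianPDFReal 0 v x) := by
  have hv' : (0:ℝ) < v := by exact_mod_cast pos_iff_ne_zero.mpr hv
  have hb : (0:ℝ) < (2*(v:ℝ))⁻¹ := by positivity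
  have h := integrable_rpow_mul_exp_neg_mul_sq hb (s := 1) (by norm_num)
  simp_rw [Real.rpow_one] at h
  have heq : (fun x : ℝ => x * gaussianPDFReal 0 v x)
      = fun x : ℝ => (Real.sqrt (2*π*(v:ℝ)))⁻¹ * (x * rexp (-(2*(v:ℝ))⁻¹ * x^2)) := by
    funext x
    unfold gaussianPDFReal
    rw [show -(x-0)^2/(2*(v:ℝ)) = -(2*(v:ℝ))⁻¹ * x^2 from by ring]
    ring
  rw [heq]
  exact h.const_mul _

lemma integrable_id_gauss (v : ℝ≥0) : Integrable (fun x : ℝ => x) (gaussianReal 0 v) := by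
  by_cases hv : v = 0
  · rw [hv, gaussianReal_zero_var]
    exact (integrable_const ((0:ℝ))).congr (ae_eq_dirac (fun x : ℝ => x)).symm
  · rw [gaussianReal_of_var_ne_zero _ hv,
      integrable_withDensity_iff (measurable_gaussianPDF _ _)
        (ae_of_all _ fun x => ENNReal.ofReal_lt_top)]
    simp_rw [gaussianPDF, ENNReal.toReal_ofReal (gaussianPDFReal_nonneg _ _ _)]
    exact integrable_x_mul_pdf v hv

lemma integral_max_gaussian (v : ℝ≥0) :
    ∫ x, max x 0 ∂(gaussianReal 0 v) = Real.sqrt v / Real.sqrt (2*π) := by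
  by_cases hv : v = 0
  · rw [hv, gaussianReal_zero_var, integral_dirac]
    simp
  have hv' : (0:ℝ) < v := by exact_mod_cast pos_iff_ne_zero.mpr hv
  rw [gaussianReal_of_var_ne_zero _ hv]
  have hd : (gaussianPDF 0 v) = fun x => ((Real.toNNReal (gaussianPDFReal 0 v x) : ℝ≥0) : ℝ≥0∞) := rfl
  rw [hd, integral_withDensity_eq_integral_smul
    ((measurable_gaussianPDFReal 0 v).real_toNNReal)]
  have hsm : ∀ x : ℝ, (Real.toNNReal (gaussianPDFReal 0 v x)) • max x 0
      = (Set.Ioi (0:ℝ)).indicator (fun x => gaussianPDFReal 0 v x * x) x := by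
    intro x
    rw [NNReal.smul_def, Real.coe_toNNReal _ (gaussianPDFReal_nonneg _ _ _)]
    by_cases hx : 0 < x
    · rw [Set.indicator_of_mem (show x ∈ Set.Ioi 0 from hx), max_eq_left hx.le, smul_eq_mul]
    · rw [Set.indicator_of_notMem (show x ∉ Set.Ioi 0 from hx), max_eq_right (not_lt.mp hx),
        smul_zero]
  simp_rw [hsm]
  rw [integral_indicator measurableSet_Ioi]
  have hIoi : ∫ x in Set.Ioi (0:ℝ), x * rexp (-x^2/(2*(v:ℝ))) = (v:ℝ) := by
    have hderiv : ∀ x ∈ Set.Ici (0:ℝ),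
        HasDerivAt (fun x : ℝ => -(v:ℝ) * rexp (-x^2/(2*(v:ℝ))))
          (x * rexp (-x^2/(2*(v:ℝ)))) x := by
      intro x _
      have h1 : HasDerivAt (fun x : ℝ => -x^2/(2*(v:ℝ))) (-x/(v:ℝ)) x := by
        have := ((hasDerivAt_pow 2 x).neg).div_const (2*(v:ℝ))
        refine this.congr_deriv ?_
        field_simp
        ring
      have h2 := (h1.exp).const_mul (-(v:ℝ))
      refine h2.congr_deriv ?_
      field_simp
    have htend : Tendsto (fun x : ℝ => -(v:ℝ) * rexp (-x^2/(2*(v:ℝ)))) atTop (nhds 0) := by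
      rw [show (0:ℝ) = -(v:ℝ) * 0 from by ring]
      apply Filter.Tendsto.const_mul
      apply Real.tendsto_exp_atBot.comp
      refine Filter.Tendsto.atBot_div_const (by positivity) ?_
      exact tendsto_neg_atTop_atBot.comp (tendsto_pow_atTop two_ne_zero)
    have hint : IntegrableOn (fun x : ℝ => x * rexp (-x^2/(2*(v:ℝ)))) (Set.Ioi 0) := by
      have hb : (0:ℝ) < (2*(v:ℝ))⁻¹ := by positivity
      have h := integrable_rpow_mul_exp_neg_mul_sq hb (s := 1) (by norm_num)
      simp_rw [Real.rpow_one] at h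
      refine (h.integrableOn).congr_fun ?_ measurableSet_Ioi
      intro x _
      show x * rexp (-(2*(v:ℝ))⁻¹ * x^2) = x * rexp (-x^2/(2*(v:ℝ)))
      rw [show -(2*(v:ℝ))⁻¹ * x^2 = -x^2/(2*(v:ℝ)) from by ring]
    have := integral_Ioi_of_hasDerivAt_of_tendsto
      (((hderiv 0 Set.self_mem_Ici).continuousAt).continuousWithinAt)
      (fun x hx => hderiv x (Set.mem_Ici.mpr (le_of_lt hx))) hint htend
    rw [this]
    norm_num
  calc ∫ x in Set.Ioi (0:ℝ), gaussianPDFReal 0 v x * x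
      = (Real.sqrt (2*π*(v:ℝ)))⁻¹ * ∫ x in Set.Ioi (0:ℝ), x * rexp (-x^2/(2*(v:ℝ))) := by
        rw [← integral_const_mul]
        congr 1
        ext x
        unfold gaussianPDFReal
        rw [show ((x:ℝ)-0)^2 = x^2 from by ring]
        ring
    _ = Real.sqrt v / Real.sqrt (2*π) := by
        rw [hIoi]
        rw [Real.sqrt_mul (by positivity) (v:ℝ)]
        have h1 : Real.sqrt (2*π) ≠ 0 := by positivity
        have h2 : Real.sqrt (v:ℝ) ≠ 0 := by positivity
        field_simp
        linear_combination (-1:ℝ) * Real.mul_self_sqrt v.coe_nonneg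

lemma indep_map_add {Ωs : Type*} [MeasurableSpace Ωs] {P : Measure Ωs} [IsProbabilityMeasure P]
    {f g : Ωs → ℝ} (hf : Measurable f) (hg : Measurable g) (h : IndepFun f g P)
    {v1 v2 : ℝ≥0} (hfl : P.map f = gaussianReal 0 v1) (hgl : P.map g = gaussianReal 0 v2) :
    P.map (fun ω => f ω + g ω) = gaussianReal 0 (v1 + v2) := by
  have hjoint : P.map (fun ω => (f ω, g ω)) = (P.map f).prod (P.map g) :=
    (indepFun_iff_map_prod_eq_prod_map_map hf.aemeasurable hg.aemeasurable).mp h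
  have hcomp : (fun ω => f ω + g ω) = (fun p : ℝ × ℝ => p.1 + p.2) ∘ (fun ω => (f ω, g ω)) := rfl
  rw [hcomp, ← Measure.map_map measurable_add (hf.prodMk hg), hjoint, hfl, hgl, gaussian_conv]

/-- In the proxy-metric model — `(τ_Y, τ_S)` a centered bivariate Gaussian
vector with covariance `Λ`, independently `(ε_Y, ε_S)` a centered bivariate Gaussian
vector with covariance `(2/M)Ω`, and estimated effects `τ̂_Y = τ_Y + ε_Y`,
`τ̂_S = τ_S + ε_S` — the true expected reward of the decision rule that launches when
the observed proxy effect is positive satisfies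
`E[τ_Y | τ̂_S > 0] = √(2/π) · Λ₁₂ / √(Λ₂₂ + 2Ω₂₂/M)`,
where `E[A | E] := E[A·1_E]/P(E)`. -/
theorem proxy_model_true_reward
    {Ωs : Type*} [MeasurableSpace Ωs] (P : Measure Ωs) [IsProbabilityMeasure P]
    (M : ℝ) (hM : 0 < M)
    (Λ11 Λ12 Λ22 Ω11 Ω12 Ω22 : ℝ)
    (hΛ : 0 ≤ Λ11 ∧ 0 ≤ Λ22 ∧ Λ12 ^ 2 ≤ Λ11 * Λ22)
    (hΩ : 0 ≤ Ω11 ∧ 0 ≤ Ω22 ∧ Ω12 ^ 2 ≤ Ω11 * Ω22)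
    (hpos : 0 < Λ22 + 2 / M * Ω22)
    (τY τS εY εS : Ωs → ℝ)
    (hτY : Measurable τY) (hτS : Measurable τS) (hεY : Measurable εY) (hεS : Measurable εS)
    (hτlaw : IsBivariateGaussian (P.map (fun ω => (τY ω, τS ω))) 0 0 Λ11 Λ12 Λ22)
    (hεlaw : IsBivariateGaussian (P.map (fun ω => (εY ω, εS ω))) 0 0
      (2 / M * Ω11) (2 / M * Ω12) (2 / M * Ω22))
    (hindep : IndepFun (fun ω => (τY ω, τS ω)) (fun ω => (εY ω, εS ω)) P) :
    (∫ ω in {ω | 0 < τS ω + εS ω}, τY ω ∂P) / (P {ω | 0 < τS ω + εS ω}).toReal =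
      Real.sqrt (2 / π) * Λ12 / Real.sqrt (Λ22 + 2 * Ω22 / M) := by
  obtain ⟨hΛ11, hΛ22, hΛc⟩ := hΛ
  obtain ⟨hΩ11, hΩ22, hΩc⟩ := hΩ
  set Z : Ωs → ℝ := fun ω => τS ω + εS ω with hZdef
  have hZmeas : Measurable Z := hτS.add hεS
  set vB : ℝ := Λ22 + 2 / M * Ω22 with hvBdef
  have hvB : 0 < vB := hpos
  have hΩ22' : (0:ℝ) ≤ 2 / M * Ω22 := by positivity
  -- law of a•τY + b•Z
  have key : ∀ a b : ℝ, P.map (fun ω => a * τY ω + b * Z ω)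
      = gaussianReal 0 (Real.toNNReal (a^2*Λ11 + 2*a*b*Λ12 + b^2*vB)) := by
    intro a b
    have h1 : P.map (fun ω => a * τY ω + b * τS ω)
        = gaussianReal 0 (Real.toNNReal (a^2*Λ11 + 2*a*b*Λ12 + b^2*Λ22)) := by
      have h := hτlaw a b
      rw [Measure.map_map (show Measurable fun p : ℝ × ℝ => a * p.1 + b * p.2 by fun_prop)
        (hτY.prodMk hτS)] at h
      simpa [Function.comp_def] using h
    have h2 : P.map (fun ω => b * εS ω)
        = gaussianReal 0 (Real.toNNReal (b^2*(2/M*Ω22))) := by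
      have h := hεlaw 0 b
      rw [Measure.map_map (show Measurable fun p : ℝ × ℝ => 0 * p.1 + b * p.2 by fun_prop)
        (hεY.prodMk hεS)] at h
      have hfun : ((fun p : ℝ × ℝ => 0 * p.1 + b * p.2) ∘ fun ω => (εY ω, εS ω))
          = fun ω => b * εS ω := by funext ω; simp [Function.comp]
      rw [hfun] at h
      rw [h]
      norm_num
    have hI : IndepFun (fun ω => a * τY ω + b * τS ω) (fun ω => b * εS ω) P := by
      have := hindep.comp (φ := fun p : ℝ × ℝ => a * p.1 + b * p.2)
        (ψ := fun p : ℝ × ℝ => b * p.2) (by fun_prop) (by fun_prop)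
      exact this
    have hsum := indep_map_add (by fun_prop) (hεS.const_mul b) hI h1 h2
    have hfun2 : (fun ω => (a * τY ω + b * τS ω) + b * εS ω)
        = fun ω => a * τY ω + b * Z ω := by
      funext ω; simp only [hZdef]; ring
    rw [hfun2] at hsum
    rw [hsum, ← Real.toNNReal_add (psd_quad hΛ11 hΛ22 hΛc a b) (by positivity)]
    congr 2
    rw [hvBdef]
    ring
  have hvBnn : Real.toNNReal vB ≠ 0 := by
    rw [ne_eq, Real.toNNReal_eq_zero]
    exact not_le.mpr hvB
  have hZlaw : P.map Z = gaussianReal 0 (Real.toNNReal vB) := by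
    have h := key 0 1
    have hfun : (fun ω => 0 * τY ω + 1 * Z ω) = Z := by funext ω; ring
    rw [hfun] at h
    rw [h]
    norm_num
  have hsetZ : MeasurableSet {ω | 0 < Z ω} := measurableSet_lt measurable_const hZmeas
  have hPhalf : P {ω | 0 < Z ω} = 1/2 := by
    have hpre : {ω | 0 < Z ω} = Z ⁻¹' (Set.Ioi 0) := rfl
    rw [hpre, ← Measure.map_apply hZmeas measurableSet_Ioi, hZlaw, gaussianReal_Ioi _ hvBnn]
  have hXlaw : P.map τY = gaussianReal 0 (Real.toNNReal Λ11) := by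
    have h := hτlaw 1 0
    rw [Measure.map_map (show Measurable fun p : ℝ × ℝ => 1 * p.1 + 0 * p.2 by fun_prop)
      (hτY.prodMk hτS)] at h
    have hfun : ((fun p : ℝ × ℝ => 1 * p.1 + 0 * p.2) ∘ fun ω => (τY ω, τS ω)) = τY := by
      funext ω; simp
    rw [hfun] at h
    rw [h]
    norm_num
  have hXint : Integrable τY P := by
    have h := integrable_id_gauss (Real.toNNReal Λ11)
    rw [← hXlaw] at h
    exact (integrable_map_measure aestronglyMeasurable_id hτY.aemeasurable).mp h
  have hZint : Integrable Z P := by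
    have h := integrable_id_gauss (Real.toNNReal vB)
    rw [← hZlaw] at h
    exact (integrable_map_measure aestronglyMeasurable_id hZmeas.aemeasurable).mp h
  -- the reward as a function of the tilt
  set va : ℝ → ℝ := fun a => a^2*Λ11 + 2*a*Λ12 + vB with hvadef
  have hva_nonneg : ∀ a : ℝ, 0 ≤ va a := by
    intro a
    have hc : Λ12^2 ≤ Λ11 * vB := by
      rw [hvBdef]
      nlinarith [mul_nonneg hΛ11 hΩ22']
    have := psd_quad hΛ11 (le_of_lt hvB) hc a 1
    simpa [hvadef] using this
  have hkey1 : ∀ a : ℝ, P.map (fun ω => a * τY ω + Z ω)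
      = gaussianReal 0 (Real.toNNReal (va a)) := by
    intro a
    have h := key a 1
    have hfun : (fun ω => a * τY ω + 1 * Z ω) = fun ω => a * τY ω + Z ω := by
      funext ω; ring
    rw [hfun] at h
    rw [h, hvadef]
    norm_num
  set G : ℝ → ℝ := fun a => ∫ ω, max (a * τY ω + Z ω) 0 ∂P with hGdef
  have hG : ∀ a : ℝ, G a = Real.sqrt (va a) / Real.sqrt (2*π) := by
    intro a
    have hm : AEMeasurable (fun ω => a * τY ω + Z ω) P :=
      ((hτY.const_mul a).add hZmeas).aemeasurable
    have hsm : AEStronglyMeasurable (fun x : ℝ => max x 0)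
        (P.map (fun ω => a * τY ω + Z ω)) :=
      (continuous_id.max continuous_const).aestronglyMeasurable
    have hmap := integral_map hm hsm
    simp only [hGdef]
    rw [← hmap, hkey1 a, integral_max_gaussian, Real.coe_toNNReal _ (hva_nonneg a)]
  have hva0 : va 0 = vB := by simp [hvadef]
  have hDva : HasDerivAt va (2*Λ12) 0 := by
    have h := (((hasDerivAt_pow 2 (0:ℝ)).mul_const Λ11).add
      (((hasDerivAt_id' (0:ℝ)).const_mul 2).mul_const Λ12)).add_const vB
    rw [hvadef]
    refine h.congr_deriv ?_
    norm_num
  have hsqrtvB : Real.sqrt vB ≠ 0 := by positivity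
  have hs2π : Real.sqrt (2*π) ≠ 0 := by positivity
  set D : ℝ := Λ12 / (Real.sqrt vB * Real.sqrt (2*π)) with hDdef
  have hDer : HasDerivAt (fun a => Real.sqrt (va a) / Real.sqrt (2*π)) D 0 := by
    have hva0ne : va 0 ≠ 0 := by rw [hva0]; exact ne_of_gt hvB
    have hs := (Real.hasDerivAt_sqrt hva0ne).comp 0 hDva
    have hdc := hs.div_const (Real.sqrt (2*π))
    refine hdc.congr_deriv ?_
    rw [hDdef, hva0]
    field_simp
  have hslope : Tendsto (fun a => (G a - G 0)/a) (𝓝[≠] (0:ℝ)) (𝓝 D) := by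
    have h := hasDerivAt_iff_tendsto_slope.mp hDer
    refine h.congr fun a => ?_
    simp only [slope_def_field, sub_zero]
    rw [← hG, ← hG]
  have hZne : ∀ᵐ ω ∂P, Z ω ≠ 0 := by
    have h0 : P {ω | Z ω = 0} = 0 := by
      have hpre : {ω | Z ω = 0} = Z ⁻¹' ({0} : Set ℝ) := rfl
      rw [hpre, ← Measure.map_apply hZmeas (measurableSet_singleton 0), hZlaw]
      exact gaussianReal_absolutelyContinuous 0 hvBnn (measure_singleton 0)
    rw [ae_iff]
    simpa using h0
  set L : ℝ := ∫ ω, Set.indicator {ω' | 0 < Z ω'} τY ω ∂P with hLdef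
  have hDCT : Tendsto (fun a : ℝ => ∫ ω, (max (a * τY ω + Z ω) 0 - max (Z ω) 0) / a ∂P)
      (𝓝[≠] (0:ℝ)) (𝓝 L) := by
    rw [hLdef]
    apply tendsto_integral_filter_of_dominated_convergence (bound := fun ω => |τY ω|)
    · refine Filter.Eventually.of_forall fun a => ?_
      exact (((((hτY.const_mul a).add hZmeas).max measurable_const).sub
        (hZmeas.max measurable_const)).div_const a).aestronglyMeasurable
    · refine Filter.Eventually.of_forall fun a => Filter.Eventually.of_forall fun ω => ?_
      by_cases ha : a = 0
      · subst ha
        simp only [zero_mul, zero_add, sub_self, zero_div, norm_zero]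
        positivity
      · rw [Real.norm_eq_abs, abs_div, div_le_iff₀ (abs_pos.mpr ha)]
        calc |max (a * τY ω + Z ω) 0 - max (Z ω) 0| ≤ |(a * τY ω + Z ω) - Z ω| :=
              abs_max_sub_max_le_abs _ _ _
          _ = |τY ω| * |a| := by rw [add_sub_cancel_right, abs_mul, mul_comm]
    · exact hXint.abs
    · filter_upwards [hZne] with ω hω
      have hc : Tendsto (fun a : ℝ => a * τY ω + Z ω) (𝓝 0) (𝓝 (Z ω)) := by
        have hct : Tendsto (fun a : ℝ => a * τY ω + Z ω) (𝓝 0) (𝓝 (0 * τY ω + Z ω)) :=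
          ((continuous_id.mul continuous_const).add continuous_const).tendsto 0
        simpa using hct
      rcases lt_or_gt_of_ne hω with hneg | hpos
      · have h1 : ∀ᶠ a in 𝓝 (0:ℝ), a * τY ω + Z ω < 0 := hc.eventually (eventually_lt_nhds hneg)
        have hev : ∀ᶠ a in 𝓝[≠] (0:ℝ), (max (a * τY ω + Z ω) 0 - max (Z ω) 0) / a = 0 := by
          filter_upwards [h1.filter_mono nhdsWithin_le_nhds] with a h2
          rw [max_eq_right h2.le, max_eq_right hneg.le]
          simp
        have hind : Set.indicator {ω' | 0 < Z ω'} τY ω = 0 :=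
          Set.indicator_of_notMem (by simpa using not_lt.mpr hneg.le) _
        rw [hind]
        refine Filter.Tendsto.congr' ?_ tendsto_const_nhds
        filter_upwards [hev] with a ha
        exact ha.symm
      · have h1 : ∀ᶠ a in 𝓝 (0:ℝ), 0 < a * τY ω + Z ω := hc.eventually (eventually_gt_nhds hpos)
        have hev : ∀ᶠ a in 𝓝[≠] (0:ℝ),
            (max (a * τY ω + Z ω) 0 - max (Z ω) 0) / a = τY ω := by
          filter_upwards [h1.filter_mono nhdsWithin_le_nhds, self_mem_nhdsWithin] with a h2 ha
          rw [max_eq_left h2.le, max_eq_left hpos.le, add_sub_cancel_right, mul_comm,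
            mul_div_assoc, div_self ha, mul_one]
        have hind : Set.indicator {ω' | 0 < Z ω'} τY ω = τY ω :=
          Set.indicator_of_mem (show ω ∈ {ω' | 0 < Z ω'} from hpos) _
        rw [hind]
        refine Filter.Tendsto.congr' ?_ tendsto_const_nhds
        filter_upwards [hev] with a ha
        exact ha.symm
  have hG0 : G 0 = ∫ ω, max (Z ω) 0 ∂P := by
    simp only [hGdef, zero_mul, zero_add]
  have hquot : ∀ᶠ a in 𝓝[≠] (0:ℝ),
      ∫ ω, (max (a * τY ω + Z ω) 0 - max (Z ω) 0) / a ∂P = (G a - G 0)/a := by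
    refine Filter.Eventually.of_forall fun a => ?_
    have hint1 : Integrable (fun ω => max (a * τY ω + Z ω) 0) P :=
      ((hXint.const_mul a).add hZint).pos_part
    have hint0 : Integrable (fun ω => max (Z ω) 0) P := hZint.pos_part
    rw [integral_div, integral_sub hint1 hint0, hG0]
  have hLD : L = D :=
    tendsto_nhds_unique (Filter.Tendsto.congr' hquot hDCT) hslope
  have hsetid : {ω | 0 < τS ω + εS ω} = {ω | 0 < Z ω} := rfl
  rw [hsetid, ← integral_indicator hsetZ, ← hLdef, hLD, hPhalf]
  rw [show ((1/2 : ℝ≥0∞)).toReal = (1/2 : ℝ) by simp]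
  have hvBeq : Λ22 + 2*Ω22/M = vB := by rw [hvBdef]; ring
  rw [hvBeq, hDdef]
  have h2 : Real.sqrt 2 * Real.sqrt 2 = 2 := Real.mul_self_sqrt (by norm_num)
  have hsπ : Real.sqrt π ≠ 0 := by
    have := Real.pi_pos
    positivity
  have hs2 : Real.sqrt 2 ≠ 0 := by positivity
  rw [show Real.sqrt (2/π) = Real.sqrt 2 / Real.sqrt π from Real.sqrt_div (by norm_num) π]
  rw [show Real.sqrt (2*π) = Real.sqrt 2 * Real.sqrt π from Real.sqrt_mul (by norm_num) π]
  field_simp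
  linear_combination (-Λ12) * h2
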